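/- Varadhan's Lemma for measures on a compact set: if probability measures μ_k on a compact metric space X satisfy the large deviation principle with speed k and rate function I, and F : X → ℝ is continuous, then lim_{k→∞} (1/k) log ∫_X e^{kF(x)} dμ_k(x) = sup_{x ∈ X}(F(x) − I(x)). -/

import Mathlib

open MeasureTheory Filter
open scoped ENNReal

lemma varadhan_aux_le {k : ℕ} (hk : 1 ≤ k) {m : ℝ≥0∞} {c : ℝ}
    (h : (((k : ℝ)⁻¹ : ℝ) : EReal) * ENNReal.log m < (c : EReal)) :
    m ≤ ENNReal.ofReal (Real.exp ((k : ℝ) * c)) := by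
  have hk0 : (0:ℝ) < (k:ℝ) := by exact_mod_cast hk
  by_contra hcon
  push_neg at hcon
  have h1 : ((( (k:ℝ) * c : ℝ)) : EReal) < ENNReal.log m := by
    have heq : (((k:ℝ) * c : ℝ) : EReal) = ENNReal.log (ENNReal.ofReal (Real.exp ((k:ℝ)*c))) := by
      rw [ENNReal.log_ofReal_of_pos (Real.exp_pos _), Real.log_exp]
    rw [heq]
    exact ENNReal.log_lt_log_iff.2 hcon
  have h2 : (((k:ℝ)⁻¹ : ℝ) : EReal) * (((k:ℝ) * c : ℝ) : EReal)
      ≤ (((k:ℝ)⁻¹ : ℝ) : EReal) * ENNReal.log m :=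
    mul_le_mul_of_nonneg_left h1.le (EReal.coe_nonneg.2 (by positivity))
  rw [← EReal.coe_mul, ← mul_assoc, inv_mul_cancel₀ hk0.ne', one_mul] at h2
  exact absurd (h2.trans_lt h) (lt_irrefl _)

lemma varadhan_aux_ge {k : ℕ} (hk : 1 ≤ k) {m : ℝ≥0∞} {c : ℝ}
    (h : (c : EReal) < (((k : ℝ)⁻¹ : ℝ) : EReal) * ENNReal.log m) :
    ENNReal.ofReal (Real.exp ((k : ℝ) * c)) ≤ m := by
  have hk0 : (0:ℝ) < (k:ℝ) := by exact_mod_cast hk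
  by_contra hcon
  push_neg at hcon
  have h1 : ENNReal.log m < ((((k:ℝ) * c : ℝ)) : EReal) := by
    have heq : (((k:ℝ) * c : ℝ) : EReal) = ENNReal.log (ENNReal.ofReal (Real.exp ((k:ℝ)*c))) := by
      rw [ENNReal.log_ofReal_of_pos (Real.exp_pos _), Real.log_exp]
    rw [heq]
    exact ENNReal.log_lt_log_iff.2 hcon
  have h2 : (((k:ℝ)⁻¹ : ℝ) : EReal) * ENNReal.log m
      ≤ (((k:ℝ)⁻¹ : ℝ) : EReal) * (((k:ℝ) * c : ℝ) : EReal) :=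
    mul_le_mul_of_nonneg_left h1.le (EReal.coe_nonneg.2 (by positivity))
  rw [← EReal.coe_mul, ← mul_assoc, inv_mul_cancel₀ hk0.ne', one_mul] at h2
  exact absurd (h.trans_le h2) (lt_irrefl _)

lemma varadhan_aux_coe {x : ℝ≥0∞} (hx : x ≠ ⊤) : (x : EReal) = ((x.toReal : ℝ) : EReal) := by
  lift x to NNReal using hx
  simp [EReal.coe_nnreal_eq_coe_real]

/-- Varadhan's Lemma on a compact metric space: under the large deviation
principle with speed `k` and rate function `I`, for continuous `F`,
`(1/k) log ∫ e^{kF} dμ_k → sup_x (F(x) - I(x))`. -/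
theorem stmt15 {X : Type*} [MetricSpace X] [CompactSpace X]
    [MeasurableSpace X] [BorelSpace X]
    (μ : ℕ → Measure X) [∀ k, IsProbabilityMeasure (μ k)]
    (I : X → ℝ≥0∞) (hlsc : LowerSemicontinuous I)
    (hub : ∀ C : Set X, IsClosed C →
      Filter.atTop.limsup (fun k : ℕ => (((k : ℝ)⁻¹ : ℝ) : EReal) * ENNReal.log (μ k C))
        ≤ - ⨅ x ∈ C, (I x : EReal))
    (hlb : ∀ U : Set X, IsOpen U →
      - ⨅ x ∈ U, (I x : EReal)
        ≤ Filter.atTop.liminf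
            (fun k : ℕ => (((k : ℝ)⁻¹ : ℝ) : EReal) * ENNReal.log (μ k U)))
    (F : X → ℝ) (hF : Continuous F) :
    Filter.Tendsto
      (fun k : ℕ =>
        (((k : ℝ)⁻¹ * Real.log (∫ x, Real.exp ((k : ℝ) * F x) ∂ μ k) : ℝ) : EReal))
      Filter.atTop
      (nhds (⨆ x, ((F x : EReal) - (I x : EReal)))) := by
  -- X is nonempty
  have hne : Nonempty X := by
    by_contra h
    rw [not_nonempty_iff] at h
    have h1 : (μ 0) Set.univ = 1 := measure_univ
    rw [Set.univ_eq_empty_iff.2 h] at h1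
    simp at h1
  -- bounds for F
  obtain ⟨zM, -, hzM⟩ := isCompact_univ.exists_isMaxOn Set.univ_nonempty hF.continuousOn
  obtain ⟨zm, -, hzm⟩ := isCompact_univ.exists_isMinOn Set.univ_nonempty hF.continuousOn
  have hFM : ∀ x, F x ≤ F zM := fun x => hzM (Set.mem_univ x)
  have hFm : ∀ x, F zm ≤ F x := fun x => hzm (Set.mem_univ x)
  set M := F zM with hM
  set m0 := F zm with hm0
  -- some point with finite rate
  have hIfin : ∃ x₁, I x₁ ≠ ⊤ := by
    by_contra hcon
    push_neg at hcon
    have h0 := hub Set.univ isClosed_univ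
    have hconst : (fun k : ℕ => (((k:ℝ)⁻¹:ℝ):EReal) * ENNReal.log ((μ k) Set.univ))
        = fun _ : ℕ => (0:EReal) := by
      funext k; simp [measure_univ]
    rw [hconst, limsup_const] at h0
    have hinf : (⨅ x ∈ Set.univ, (I x : EReal)) = ⊤ := by
      simp [hcon]
    rw [hinf] at h0
    simp at h0
  -- the limit value
  set LE := ⨆ x, ((F x : EReal) - (I x : EReal)) with hLEdef
  have hLEtop : LE ≠ ⊤ := by
    refine ne_of_lt (lt_of_le_of_lt (iSup_le fun x => ?_) (EReal.coe_lt_top M))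
    rcases eq_or_ne (I x) ⊤ with hIx | hIx
    · rw [hIx, EReal.coe_ennreal_top, EReal.sub_top]
      exact bot_le
    · rw [varadhan_aux_coe hIx, ← EReal.coe_sub]
      exact EReal.coe_le_coe_iff.2 (by
        have := ENNReal.toReal_nonneg (a := I x)
        have := hFM x
        simp only [hM]; linarith)
  have hLEbot : LE ≠ ⊥ := by
    obtain ⟨x₁, hx₁⟩ := hIfin
    refine ne_of_gt (lt_of_lt_of_le ?_ (le_iSup (fun x => ((F x : EReal) - (I x : EReal))) x₁))
    rw [varadhan_aux_coe hx₁, ← EReal.coe_sub]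
    exact EReal.bot_lt_coe _
  set Lr := LE.toReal with hLr
  have hLE : LE = ((Lr : ℝ) : EReal) := (EReal.coe_toReal hLEtop hLEbot).symm
  -- basic facts about the integrals
  set aR : ℕ → ℝ := fun k => (k:ℝ)⁻¹ * Real.log (∫ x, Real.exp ((k : ℝ) * F x) ∂ μ k) with haR
  have hmeas : ∀ k : ℕ, Measurable fun x => ENNReal.ofReal (Real.exp ((k:ℝ) * F x)) := fun k =>
    ENNReal.measurable_ofReal.comp (Real.continuous_exp.comp (continuous_const.mul hF)).measurable
  set J : ℕ → ℝ≥0∞ := fun k => ∫⁻ x, ENNReal.ofReal (Real.exp ((k:ℝ) * F x)) ∂ μ k with hJ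
  have hJle : ∀ k : ℕ, J k ≤ ENNReal.ofReal (Real.exp ((k:ℝ) * M)) := by
    intro k
    calc J k ≤ ∫⁻ _, ENNReal.ofReal (Real.exp ((k:ℝ)*M)) ∂ μ k :=
        lintegral_mono fun x => ENNReal.ofReal_le_ofReal (Real.exp_le_exp.2
          (mul_le_mul_of_nonneg_left (hFM x) (Nat.cast_nonneg k)))
      _ = ENNReal.ofReal (Real.exp ((k:ℝ)*M)) := by simp [lintegral_const, measure_univ]
  have hJtop : ∀ k, J k ≠ ⊤ := fun k => ne_top_of_le_ne_top ENNReal.ofReal_ne_top (hJle k)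
  have hJge : ∀ k : ℕ, ENNReal.ofReal (Real.exp ((k:ℝ) * m0)) ≤ J k := by
    intro k
    calc ENNReal.ofReal (Real.exp ((k:ℝ)*m0))
        = ∫⁻ _, ENNReal.ofReal (Real.exp ((k:ℝ)*m0)) ∂ μ k := by
          simp [lintegral_const, measure_univ]
      _ ≤ J k := lintegral_mono fun x => ENNReal.ofReal_le_ofReal (Real.exp_le_exp.2
          (mul_le_mul_of_nonneg_left (hFm x) (Nat.cast_nonneg k)))
  have hJpos : ∀ k, 0 < (J k).toReal := fun k =>
    ENNReal.toReal_pos ((lt_of_lt_of_le (ENNReal.ofReal_pos.2 (Real.exp_pos _)) (hJge k)).ne')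
      (hJtop k)
  have hInt : ∀ k : ℕ, ∫ x, Real.exp ((k:ℝ) * F x) ∂ μ k = (J k).toReal := fun k =>
    integral_eq_lintegral_of_nonneg_ae (Filter.Eventually.of_forall fun x => (Real.exp_pos _).le)
      (Real.continuous_exp.comp (continuous_const.mul hF)).aestronglyMeasurable
  -- lower eventual bound
  have hlow : ∀ ε : ℝ, 0 < ε → ∀ᶠ k : ℕ in atTop, Lr - ε ≤ aR k := by
    intro ε hε
    set ε' := ε/3 with hε'
    have hε'pos : 0 < ε' := by positivity
    have hx : ((Lr - ε' : ℝ) : EReal) < LE := by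
      rw [hLE]; exact EReal.coe_lt_coe_iff.2 (by linarith)
    rw [hLEdef, lt_iSup_iff] at hx
    obtain ⟨x₀, hx₀⟩ := hx
    have hIx₀ : I x₀ ≠ ⊤ := by
      intro h
      rw [h, EReal.coe_ennreal_top, EReal.sub_top] at hx₀
      exact absurd hx₀ (not_lt_bot)
    set t₀ := (I x₀).toReal with ht₀def
    have ht₀ : Lr - ε' < F x₀ - t₀ := by
      rw [varadhan_aux_coe hIx₀, ← EReal.coe_sub] at hx₀
      exact EReal.coe_lt_coe_iff.1 hx₀
    set U : Set X := {y | F x₀ - ε' < F y} with hU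
    have hUopen : IsOpen U := isOpen_lt continuous_const hF
    have hx₀U : x₀ ∈ U := by
      simp only [hU, Set.mem_setOf_eq]; linarith
    have hliminf : ((-t₀ - ε' : ℝ) : EReal)
        < atTop.liminf (fun k : ℕ => (((k:ℝ)⁻¹:ℝ):EReal) * ENNReal.log (μ k U)) := by
      have hA : ((-t₀ : ℝ) : EReal) ≤ - ⨅ x ∈ U, (I x : EReal) := by
        rw [show ((-t₀ : ℝ) : EReal) = -((t₀ : ℝ) : EReal) by rw [← EReal.coe_neg]]
        rw [EReal.neg_le_neg_iff]
        refine le_trans (iInf₂_le x₀ hx₀U) ?_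
        rw [varadhan_aux_coe hIx₀]
      have hB : ((-t₀ - ε' : ℝ) : EReal) < ((-t₀ : ℝ) : EReal) :=
        EReal.coe_lt_coe_iff.2 (by linarith)
      exact lt_of_lt_of_le (lt_of_lt_of_le hB hA) (hlb U hUopen)
    have hev1 := eventually_lt_of_lt_liminf hliminf
    filter_upwards [hev1, eventually_ge_atTop 1] with k hk1 hk2
    have hkpos : (0:ℝ) < (k:ℝ) := by exact_mod_cast hk2
    have hμU : ENNReal.ofReal (Real.exp ((k:ℝ) * (-t₀ - ε'))) ≤ μ k U := varadhan_aux_ge hk2 hk1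
    have hJk : ENNReal.ofReal (Real.exp ((k:ℝ) * (Lr - ε))) ≤ J k := by
      calc ENNReal.ofReal (Real.exp ((k:ℝ)*(Lr - ε)))
          ≤ ENNReal.ofReal (Real.exp ((k:ℝ)*(F x₀ - ε'))) *
            ENNReal.ofReal (Real.exp ((k:ℝ)*(-t₀ - ε'))) := by
            rw [← ENNReal.ofReal_mul (Real.exp_pos _).le, ← Real.exp_add, ← mul_add]
            exact ENNReal.ofReal_le_ofReal (Real.exp_le_exp.2
              (mul_le_mul_of_nonneg_left (by linarith) hkpos.le))
        _ ≤ ENNReal.ofReal (Real.exp ((k:ℝ)*(F x₀ - ε'))) * μ k U := mul_le_mul_right hμU _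
        _ = ∫⁻ _ in U, ENNReal.ofReal (Real.exp ((k:ℝ)*(F x₀ - ε'))) ∂ μ k :=
            (setLIntegral_const _ _).symm
        _ ≤ ∫⁻ x in U, ENNReal.ofReal (Real.exp ((k:ℝ) * F x)) ∂ μ k :=
            setLIntegral_mono (hmeas k) fun x hx => ENNReal.ofReal_le_ofReal (Real.exp_le_exp.2
              (mul_le_mul_of_nonneg_left (le_of_lt hx) (Nat.cast_nonneg k)))
        _ ≤ J k := setLIntegral_le_lintegral _ _
    have h4 : Real.exp ((k:ℝ)*(Lr-ε)) ≤ (J k).toReal := by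
      have h5 := ENNReal.toReal_mono (hJtop k) hJk
      rwa [ENNReal.toReal_ofReal (Real.exp_pos _).le] at h5
    have h3 : (k:ℝ)*(Lr - ε) ≤ Real.log ((J k).toReal) := by
      calc (k:ℝ)*(Lr-ε) = Real.log (Real.exp ((k:ℝ)*(Lr-ε))) := (Real.log_exp _).symm
        _ ≤ Real.log ((J k).toReal) := Real.log_le_log (Real.exp_pos _) h4
    have h6 := mul_le_mul_of_nonneg_left h3 (inv_nonneg.2 hkpos.le)
    rw [← mul_assoc, inv_mul_cancel₀ hkpos.ne', one_mul] at h6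
    simpa only [haR, hInt k] using h6
  -- upper eventual bound
  have hupp : ∀ ε : ℝ, 0 < ε → ∀ᶠ k : ℕ in atTop, aR k ≤ Lr + ε := by
    intro ε hε
    set ε' := ε/4 with hε'
    have hε'pos : 0 < ε' := by positivity
    have hδ : ∀ x : X, ∃ δ : ℝ, 0 < δ ∧ ∀ y ∈ Metric.closedBall x δ, |F y - F x| ≤ ε' := by
      intro x
      obtain ⟨δ₀, hδ₀pos, hδ₀⟩ := Metric.continuous_iff.1 hF x ε' hε'pos
      refine ⟨δ₀/2, by positivity, fun y hy => ?_⟩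
      have h7 := hδ₀ y (lt_of_le_of_lt (Metric.mem_closedBall.1 hy) (by linarith))
      rw [Real.dist_eq] at h7
      exact h7.le
    choose δ hδpos hδball using hδ
    obtain ⟨t, ht⟩ := isCompact_univ.elim_finite_subcover (fun x => Metric.ball x (δ x))
      (fun x => Metric.isOpen_ball) (fun y _ => Set.mem_iUnion.2 ⟨y, Metric.mem_ball_self (hδpos y)⟩)
    have htne : t.Nonempty := by
      obtain ⟨y⟩ := hne
      obtain ⟨x, hxt, -⟩ := Set.mem_iUnion₂.1 (ht (Set.mem_univ y))
      exact ⟨x, hxt⟩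
    set C : X → Set X := fun x => Metric.closedBall x (δ x) with hC
    have hkey : ∀ i ∈ t, ∀ᶠ k : ℕ in atTop,
        (((k:ℝ)⁻¹:ℝ):EReal) * ENNReal.log (μ k (C i)) < ((Lr + 2*ε' - F i : ℝ) : EReal) := by
      intro i _
      have hA : (- ⨅ x ∈ C i, (I x : EReal)) ≤ ((Lr + ε' - F i : ℝ) : EReal) := by
        rw [show ((Lr + ε' - F i : ℝ):EReal) = -(((F i - Lr - ε' : ℝ)):EReal) by
          rw [← EReal.coe_neg]; congr 1; ring]
        rw [EReal.neg_le_neg_iff]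
        refine le_iInf₂ fun y hy => ?_
        rcases eq_or_ne (I y) ⊤ with hIy | hIy
        · rw [hIy, EReal.coe_ennreal_top]; exact le_top
        · rw [varadhan_aux_coe hIy]
          have h5 : ((F y : EReal) - (I y : EReal)) ≤ ((Lr:ℝ) : EReal) := by
            rw [← hLE, hLEdef]
            exact le_iSup (fun x => ((F x : EReal) - (I x : EReal))) y
          rw [varadhan_aux_coe hIy, ← EReal.coe_sub] at h5
          have h6 : F y - (I y).toReal ≤ Lr := EReal.coe_le_coe_iff.1 h5
          have h7 := abs_le.1 (hδball i y hy)
          exact EReal.coe_le_coe_iff.2 (by linarith [h7.1, h7.2])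
      have hB : ((Lr + ε' - F i : ℝ) : EReal) < ((Lr + 2*ε' - F i : ℝ) : EReal) :=
        EReal.coe_lt_coe_iff.2 (by linarith)
      exact eventually_lt_of_limsup_lt
        (lt_of_le_of_lt ((hub (C i) Metric.isClosed_closedBall).trans hA) hB)
    have hall := (eventually_all_finset t).2 hkey
    have hlog : ∀ᶠ k : ℕ in atTop, (k:ℝ)⁻¹ * Real.log (t.card : ℝ) ≤ ε' := by
      have h9 : Tendsto (fun k : ℕ => (k:ℝ)⁻¹ * Real.log (t.card : ℝ)) atTop (nhds 0) := by
        simpa using tendsto_inv_atTop_nhds_zero_nat.mul_const (Real.log (t.card : ℝ))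
      exact h9.eventually (eventually_le_nhds hε'pos)
    filter_upwards [hall, hlog, eventually_ge_atTop 1] with k hk1 hk2 hk3
    have hkpos : (0:ℝ) < (k:ℝ) := by exact_mod_cast hk3
    have hμb : ∀ i ∈ t, μ k (C i) ≤ ENNReal.ofReal (Real.exp ((k:ℝ) * (Lr + 2*ε' - F i))) :=
      fun i hi => varadhan_aux_le hk3 (hk1 i hi)
    have hcover2 : (Set.univ : Set X) ⊆ ⋃ i : t, C i.1 := by
      intro y hy
      obtain ⟨x, hxt, hyx⟩ := Set.mem_iUnion₂.1 (ht hy)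
      exact Set.mem_iUnion.2 ⟨⟨x, hxt⟩, Metric.ball_subset_closedBall hyx⟩
    have hcard1 : (1:ℝ) ≤ (t.card : ℝ) := by
      exact_mod_cast Nat.one_le_iff_ne_zero.2 (Finset.card_ne_zero_of_mem htne.choose_spec)
    have hJb : J k ≤ ENNReal.ofReal ((t.card : ℝ) * Real.exp ((k:ℝ) * (Lr + 3*ε'))) := by
      have hterm : ∀ i : t, ∫⁻ x in C i.1, ENNReal.ofReal (Real.exp ((k:ℝ) * F x)) ∂ μ k
          ≤ ENNReal.ofReal (Real.exp ((k:ℝ) * (Lr + 3*ε'))) := by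
        intro i
        calc ∫⁻ x in C i.1, ENNReal.ofReal (Real.exp ((k:ℝ) * F x)) ∂ μ k
            ≤ ∫⁻ _ in C i.1, ENNReal.ofReal (Real.exp ((k:ℝ) * (F i.1 + ε'))) ∂ μ k := by
              refine setLIntegral_mono measurable_const fun x hx => ?_
              refine ENNReal.ofReal_le_ofReal (Real.exp_le_exp.2
                (mul_le_mul_of_nonneg_left ?_ (Nat.cast_nonneg k)))
              have h7 := abs_le.1 (hδball i.1 x hx)
              linarith [h7.1, h7.2]
          _ = ENNReal.ofReal (Real.exp ((k:ℝ) * (F i.1 + ε'))) * μ k (C i.1) :=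
              setLIntegral_const _ _
          _ ≤ ENNReal.ofReal (Real.exp ((k:ℝ) * (F i.1 + ε'))) *
              ENNReal.ofReal (Real.exp ((k:ℝ) * (Lr + 2*ε' - F i.1))) :=
              mul_le_mul_right (hμb i.1 i.2) _
          _ = ENNReal.ofReal (Real.exp ((k:ℝ) * (Lr + 3*ε'))) := by
              rw [← ENNReal.ofReal_mul (Real.exp_pos _).le, ← Real.exp_add, ← mul_add]
              ring_nf
      calc J k = ∫⁻ x in Set.univ, ENNReal.ofReal (Real.exp ((k:ℝ) * F x)) ∂ μ k :=
            (setLIntegral_univ _).symm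
        _ ≤ ∫⁻ x in ⋃ i : t, C i.1, ENNReal.ofReal (Real.exp ((k:ℝ) * F x)) ∂ μ k :=
            lintegral_mono_set hcover2
        _ ≤ ∑' i : t, ∫⁻ x in C i.1, ENNReal.ofReal (Real.exp ((k:ℝ) * F x)) ∂ μ k :=
            lintegral_iUnion_le _ _
        _ = ∑ i : t, ∫⁻ x in C i.1, ENNReal.ofReal (Real.exp ((k:ℝ) * F x)) ∂ μ k :=
            tsum_fintype _
        _ ≤ ∑ _i : t, ENNReal.ofReal (Real.exp ((k:ℝ) * (Lr + 3*ε'))) :=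
            Finset.sum_le_sum fun i _ => hterm i
        _ = (t.card : ℝ≥0∞) * ENNReal.ofReal (Real.exp ((k:ℝ) * (Lr + 3*ε'))) := by
            rw [Finset.sum_const, Finset.card_univ, Fintype.card_coe, nsmul_eq_mul]
        _ = ENNReal.ofReal ((t.card : ℝ) * Real.exp ((k:ℝ) * (Lr + 3*ε'))) := by
            rw [ENNReal.ofReal_mul (Nat.cast_nonneg t.card), ENNReal.ofReal_natCast]
    have h4 : (J k).toReal ≤ (t.card : ℝ) * Real.exp ((k:ℝ) * (Lr + 3*ε')) := by
      have h5 := ENNReal.toReal_mono ENNReal.ofReal_ne_top hJb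
      rwa [ENNReal.toReal_ofReal (mul_nonneg (Nat.cast_nonneg _) (Real.exp_pos _).le)] at h5
    have h3 : Real.log ((J k).toReal) ≤ Real.log (t.card : ℝ) + (k:ℝ) * (Lr + 3*ε') := by
      calc Real.log ((J k).toReal)
          ≤ Real.log ((t.card : ℝ) * Real.exp ((k:ℝ) * (Lr + 3*ε'))) :=
            Real.log_le_log (hJpos k) h4
        _ = Real.log (t.card : ℝ) + (k:ℝ) * (Lr + 3*ε') := by
            rw [Real.log_mul (by linarith) (Real.exp_pos _).ne', Real.log_exp]
    have h6 := mul_le_mul_of_nonneg_left h3 (inv_nonneg.2 hkpos.le)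
    rw [mul_add, ← mul_assoc ((k:ℝ)⁻¹) ((k:ℝ)), inv_mul_cancel₀ hkpos.ne', one_mul] at h6
    have h8 : aR k ≤ (k:ℝ)⁻¹ * Real.log (t.card : ℝ) + (Lr + 3*ε') := by
      simpa only [haR, hInt k] using h6
    have : (k:ℝ)⁻¹ * Real.log (t.card : ℝ) ≤ ε' := hk2
    calc aR k ≤ (k:ℝ)⁻¹ * Real.log (t.card : ℝ) + (Lr + 3*ε') := h8
      _ ≤ ε' + (Lr + 3*ε') := by linarith
      _ ≤ Lr + ε := by rw [hε']; linarith
  -- conclude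
  have hreal : Tendsto aR atTop (nhds Lr) := by
    refine tendsto_order.2 ⟨fun b hb => ?_, fun b hb => ?_⟩
    · filter_upwards [hlow ((Lr - b)/2) (by linarith)] with k hk
      linarith
    · filter_upwards [hupp ((b - Lr)/2) (by linarith)] with k hk
      linarith
  rw [hLE]
  exact EReal.tendsto_coe.2 hreal
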